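/- Let p > 1 and let ρ(ζ) = exp(e^{2ζ}/4 − ((p+3)/(p−1))ζ), with weighted measure dμ = ρ(ζ)dζ on ℝ. Let w : ℝ → ℝ be continuously differentiable with ∫_ℝ w(ζ)² dμ(ζ) < ∞ and ∫_ℝ w'(ζ)² dμ(ζ) < ∞. Then there exists R₀' < 0 such that for all R ≤ R₀': ∫_{−∞}^R w(ζ)² dμ(ζ) ≤ 8((p−1)/(p+3))² ∫_{−∞}^R w'(ζ)² dμ(ζ). -/

import Mathlib

open Real Set Filter MeasureTheory

/-- weighted Poincaré inequality at `−∞` for the weight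
`ρ(ζ) = exp(e^{2ζ}/4 − ((p+3)/(p−1))ζ)`: for `w ∈ H¹(ℝ, dμ)`, there is `R₀' < 0` such that for
all `R ≤ R₀'`, `∫_{−∞}^R w² dμ ≤ 8((p−1)/(p+3))² ∫_{−∞}^R (w')² dμ`. -/
theorem stmt_5 (p : ℝ) (hp : 1 < p)
    (ρ : ℝ → ℝ)
    (hρ : ∀ ζ, ρ ζ = Real.exp (Real.exp (2 * ζ) / 4 - ((p + 3) / (p - 1)) * ζ))
    (w : ℝ → ℝ) (hw : ContDiff ℝ 1 w)
    (hw2 : Integrable (fun ζ => (w ζ) ^ 2 * ρ ζ))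
    (hw2' : Integrable (fun ζ => (deriv w ζ) ^ 2 * ρ ζ)) :
    ∃ R₀' < 0, ∀ R ≤ R₀',
      ∫ ζ in Iic R, (w ζ) ^ 2 * ρ ζ ≤
        8 * ((p - 1) / (p + 3)) ^ 2 * ∫ ζ in Iic R, (deriv w ζ) ^ 2 * ρ ζ := by
  set a : ℝ := (p + 3) / (p - 1) with ha_def
  have hp1 : (0:ℝ) < p - 1 := by linarith
  have hp3 : (0:ℝ) < p + 3 := by linarith
  have ha : 0 < a := div_pos hp3 hp1
  have hρeq : ρ = fun ζ => Real.exp (Real.exp (2 * ζ) / 4 - a * ζ) := funext hρ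
  have hρpos : ∀ ζ, 0 < ρ ζ := fun ζ => by rw [hρ]; exact Real.exp_pos _
  have hρcont : Continuous ρ := by rw [hρeq]; fun_prop
  have hρderiv : ∀ ζ, HasDerivAt ρ ((Real.exp (2*ζ)/2 - a) * ρ ζ) ζ := by
    intro ζ
    rw [hρeq]
    have h1 : HasDerivAt (fun x : ℝ => 2*x) 2 ζ := by
      simpa using (hasDerivAt_id ζ).const_mul (2:ℝ)
    have h2 : HasDerivAt (fun x : ℝ => Real.exp (2*x)) (Real.exp (2*ζ) * 2) ζ :=
      (Real.hasDerivAt_exp (2*ζ)).comp ζ h1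
    have h2a : HasDerivAt (fun x : ℝ => a*x) a ζ := by
      simpa using (hasDerivAt_id ζ).const_mul a
    have h3 : HasDerivAt (fun x : ℝ => Real.exp (2*x)/4 - a*x)
        (Real.exp (2*ζ)*2/4 - a) ζ := (h2.div_const 4).sub h2a
    have h4 := (Real.hasDerivAt_exp _).comp ζ h3
    refine h4.congr_deriv ?_
    ring
  have hw' : ∀ x, HasDerivAt w (deriv w x) x :=
    fun x => ((hw.differentiable one_ne_zero) x).hasDerivAt
  have hwc : Continuous w := hw.continuous
  have hw'c : Continuous (deriv w) := hw.continuous_deriv le_rfl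
  refine ⟨min (-1) (Real.log (a/2) / 2), lt_of_le_of_lt (min_le_left _ _) (by norm_num), ?_⟩
  intro R hR
  have hbound : ∀ ζ ∈ Iic R, Real.exp (2*ζ) ≤ a / 2 := by
    intro ζ hζ
    have h2ζ : 2*ζ ≤ Real.log (a/2) := by
      have := le_trans (le_trans hζ.out hR) (min_le_right (-1:ℝ) _)
      linarith
    calc Real.exp (2*ζ) ≤ Real.exp (Real.log (a/2)) := Real.exp_le_exp.2 h2ζ
      _ = a/2 := Real.exp_log (by positivity)
  -- Integrability facts on `Iic R`
  have hI2 : IntegrableOn (fun ζ => w ζ^2 * ρ ζ) (Iic R) := hw2.integrableOn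
  have hJ2 : IntegrableOn (fun ζ => deriv w ζ^2 * ρ ζ) (Iic R) := hw2'.integrableOn
  have hA : IntegrableOn (fun ζ => 2 * w ζ * deriv w ζ * ρ ζ) (Iic R) := by
    have hm : AEStronglyMeasurable (fun ζ => 2 * w ζ * deriv w ζ * ρ ζ)
        (volume.restrict (Iic R)) :=
      (((continuous_const.mul hwc).mul hw'c).mul hρcont).aestronglyMeasurable
    have hg : IntegrableOn (fun ζ => w ζ^2 * ρ ζ + deriv w ζ^2 * ρ ζ) (Iic R) := hI2.add hJ2
    refine hg.mono' hm (ae_of_all _ (fun ζ => ?_))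
    have h := hρpos ζ
    have habs : |2 * w ζ * deriv w ζ| ≤ w ζ^2 + deriv w ζ^2 :=
      abs_le.mpr ⟨by nlinarith [sq_nonneg (w ζ + deriv w ζ)],
        by nlinarith [sq_nonneg (w ζ - deriv w ζ)]⟩
    rw [Real.norm_eq_abs, abs_mul, abs_of_pos h]
    calc |2*w ζ*deriv w ζ| * ρ ζ ≤ (w ζ^2 + deriv w ζ^2) * ρ ζ :=
          mul_le_mul_of_nonneg_right habs h.le
      _ = w ζ^2*ρ ζ + deriv w ζ^2*ρ ζ := by ring
  have hB : IntegrableOn (fun ζ => w ζ^2 * ((Real.exp (2*ζ)/2 - a) * ρ ζ)) (Iic R) := by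
    have hm : AEStronglyMeasurable (fun ζ => w ζ^2 * ((Real.exp (2*ζ)/2 - a) * ρ ζ))
        (volume.restrict (Iic R)) :=
      ((hwc.pow 2).mul
        ((((Real.continuous_exp.comp (continuous_const.mul continuous_id)).div_const 2).sub
          continuous_const).mul hρcont)).aestronglyMeasurable
    have hg : IntegrableOn (fun ζ => a * (w ζ^2 * ρ ζ)) (Iic R) := hI2.const_mul a
    refine hg.mono' hm ((ae_restrict_iff' measurableSet_Iic).2 (ae_of_all _ (fun ζ hζ => ?_)))
    have h := hρpos ζ
    have he : Real.exp (2*ζ) ≤ a/2 := hbound ζ hζ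
    have hepos : 0 < Real.exp (2*ζ) := Real.exp_pos _
    have habs : |Real.exp (2*ζ)/2 - a| ≤ a := abs_le.mpr ⟨by linarith, by linarith⟩
    rw [Real.norm_eq_abs, abs_mul, abs_mul, abs_of_pos h, abs_of_nonneg (sq_nonneg (w ζ))]
    calc w ζ^2 * (|Real.exp (2*ζ)/2 - a| * ρ ζ)
        ≤ w ζ^2 * (a * ρ ζ) := by
          have := mul_le_mul_of_nonneg_right habs h.le
          nlinarith [sq_nonneg (w ζ)]
      _ = a * (w ζ^2 * ρ ζ) := by ring
  -- FTC at −∞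
  have hFderiv : ∀ x ∈ Iic R, HasDerivAt (fun ζ => w ζ^2 * ρ ζ)
      (2*w x*deriv w x*ρ x + w x^2*((Real.exp (2*x)/2 - a)*ρ x)) x := by
    intro x _
    have h1 := (((hw' x).pow 2).mul (hρderiv x))
    refine h1.congr_deriv ?_
    simp only [Pi.pow_apply]
    push_cast
    ring
  have hlim : Tendsto (fun ζ => w ζ^2 * ρ ζ) atBot
      (nhds (limUnder atBot fun ζ => w ζ^2 * ρ ζ)) :=
    tendsto_limUnder_of_hasDerivAt_of_integrableOn_Iic hFderiv (hA.add hB)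
  have hL0 : limUnder atBot (fun ζ => w ζ^2 * ρ ζ) = 0 := by
    apply IntegrableAtFilter.eq_zero_of_tendsto ⟨univ, univ_mem, hw2.integrableOn⟩ ?_ hlim
    intro s hs
    rcases mem_atBot_sets.1 hs with ⟨b, hb⟩
    apply le_antisymm le_top
    rw [← Real.volume_Iic (a := b)]
    exact measure_mono (fun x hx => hb x hx)
  have hFTC : ∫ ζ in Iic R, (2*w ζ*deriv w ζ*ρ ζ + w ζ^2*((Real.exp (2*ζ)/2 - a)*ρ ζ))
      = w R^2 * ρ R := by
    have h := integral_Iic_of_hasDerivAt_of_tendsto' hFderiv (hA.add hB) hlim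
    rw [hL0] at h
    simpa using h
  rw [integral_add hA hB] at hFTC
  set I := ∫ ζ in Iic R, w ζ^2 * ρ ζ with hI_def
  set J := ∫ ζ in Iic R, deriv w ζ^2 * ρ ζ with hJ_def
  set K := ∫ ζ in Iic R, 2*w ζ*deriv w ζ*ρ ζ with hK_def
  set M := ∫ ζ in Iic R, w ζ^2*((Real.exp (2*ζ)/2 - a)*ρ ζ) with hM_def
  have hFR : (0:ℝ) ≤ w R^2 * ρ R := mul_nonneg (sq_nonneg _) (hρpos R).le
  have hnegM : -M ≤ K := by linarith
  -- Step 1: I ≤ (4/(3a)) * (−M)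
  have key1 : I ≤ (4/(3*a)) * (-M) := by
    rw [hM_def, ← integral_neg, ← integral_const_mul]
    refine setIntegral_mono_on hI2 ((hB.neg).const_mul _) measurableSet_Iic (fun ζ hζ => ?_)
    have he : Real.exp (2*ζ) ≤ a/2 := hbound ζ hζ
    have h := hρpos ζ
    have h1 : 3*a/4 ≤ a - Real.exp (2*ζ)/2 := by linarith
    have h2 : (1:ℝ) ≤ 4/(3*a) * (a - Real.exp (2*ζ)/2) := by
      have h3 : 4/(3*a) * (3*a/4) ≤ 4/(3*a) * (a - Real.exp (2*ζ)/2) :=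
        mul_le_mul_of_nonneg_left h1 (div_nonneg (by norm_num) (by linarith))
      have h4 : 4/(3*a) * (3*a/4) = 1 := by field_simp
      linarith
    have h5 : w ζ^2 * ρ ζ ≤ (4/(3*a) * (a - Real.exp (2*ζ)/2)) * (w ζ^2 * ρ ζ) := by
      nlinarith [mul_nonneg (sq_nonneg (w ζ)) h.le]
    calc w ζ^2 * ρ ζ ≤ (4/(3*a) * (a - Real.exp (2*ζ)/2)) * (w ζ^2 * ρ ζ) := h5
      _ = 4/(3*a) * -(w ζ^2 * ((Real.exp (2*ζ)/2 - a) * ρ ζ)) := by ring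
  -- Step 2: K ≤ (3a/8) I + (8/(3a)) J
  have key2 : K ≤ (3*a/8) * I + (8/(3*a)) * J := by
    rw [hK_def, hI_def, hJ_def, ← integral_const_mul, ← integral_const_mul,
      ← integral_add (hI2.const_mul _) (hJ2.const_mul _)]
    refine setIntegral_mono_on hA ((hI2.const_mul _).add (hJ2.const_mul _))
      measurableSet_Iic (fun ζ _ => ?_)
    have h := hρpos ζ
    have hy : 2*(w ζ)*(deriv w ζ) ≤ 3*a/8*(w ζ)^2 + 8/(3*a)*(deriv w ζ)^2 := by
      rw [← sub_nonneg]
      have h5 : 3*a/8*(w ζ)^2 + 8/(3*a)*(deriv w ζ)^2 - 2*(w ζ)*(deriv w ζ)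
          = (3*a*(w ζ) - 8*(deriv w ζ))^2/(24*a) := by
        field_simp
        ring
      rw [h5]
      positivity
    calc 2*w ζ*deriv w ζ*ρ ζ = (2*(w ζ)*(deriv w ζ)) * ρ ζ := by ring
      _ ≤ (3*a/8*(w ζ)^2 + 8/(3*a)*(deriv w ζ)^2) * ρ ζ :=
          mul_le_mul_of_nonneg_right hy h.le
      _ = 3*a/8 * (w ζ^2*ρ ζ) + 8/(3*a) * (deriv w ζ^2*ρ ζ) := by ring
  -- Combine
  have hJnn : 0 ≤ J := setIntegral_nonneg measurableSet_Iic (fun ζ _ => mul_nonneg (sq_nonneg _) (hρpos ζ).le)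
  have hcomb : I ≤ 4/(3*a) * ((3*a/8) * I + (8/(3*a)) * J) := by
    calc I ≤ (4/(3*a)) * (-M) := key1
      _ ≤ (4/(3*a)) * K := mul_le_mul_of_nonneg_left hnegM (div_nonneg (by norm_num) (by linarith))
      _ ≤ 4/(3*a) * ((3*a/8) * I + (8/(3*a)) * J) :=
          mul_le_mul_of_nonneg_left key2 (div_nonneg (by norm_num) (by linarith))
  have hsimp : 4/(3*a) * ((3*a/8) * I + (8/(3*a)) * J) = I/2 + 32/(9*a^2) * J := by
    field_simp
    ring
  have hI64 : I ≤ 64/(9*a^2) * J := by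
    rw [hsimp] at hcomb
    have hd : 64/(9*a^2)*J = 2*(32/(9*a^2)*J) := by ring
    linarith
  have hconst : 64/(9*a^2) ≤ 8 * ((p-1)/(p+3))^2 := by
    have h1 : (p-1)/(p+3) = 1/a := by rw [ha_def, one_div_div]
    rw [h1]
    rw [div_le_iff₀ (by positivity)]
    have : 8 * (1/a)^2 * (9*a^2) = 72 := by field_simp; ring
    rw [this]
    norm_num
  calc I ≤ 64/(9*a^2) * J := hI64
    _ ≤ 8 * ((p-1)/(p+3))^2 * J := mul_le_mul_of_nonneg_right hconst hJnn
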